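/- Let φ(t) = (1/n)·Σ_{j=1}^n exp(iμ_j t - σ_j²t²/2) with σ_j ≥ σ₀ > 0 for all j, and suppose the number of indices j with (μ_j,σ_j) ≠ (μ₀,σ₀) is at most ε₀·n with ε₀ < 1/2. Then for all t > 0, (1 - 2ε₀)·exp(-σ₀²t²/2) ≤ |φ(t)| ≤ exp(-σ₀²t²/2). -/

import Mathlib

open Complex Real Finset

theorem stmt2 (n : ℕ) (hn : 0 < n) (μ₀ σ₀ ε₀ : ℝ) (hσ : 0 < σ₀)
    (hε₀ : 0 < ε₀) (hε₀' : ε₀ < 1 / 2)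
    (μ σ : Fin n → ℝ) (hσj : ∀ j, σ₀ ≤ σ j)
    (hprop : ((Finset.univ.filter (fun j => (μ j, σ j) ≠ (μ₀, σ₀))).card : ℝ) ≤ ε₀ * n)
    (φ : ℝ → ℂ)
    (hφ : ∀ t : ℝ, φ t = (1 / n : ℝ) *
      ∑ j, Complex.exp (Complex.I * (μ j) * t - (σ j) ^ 2 * t ^ 2 / 2)) :
    ∀ t : ℝ, 0 < t →
      (1 - 2 * ε₀) * Real.exp (-σ₀ ^ 2 * t ^ 2 / 2) ≤ ‖φ t‖ ∧
      ‖φ t‖ ≤ Real.exp (-σ₀ ^ 2 * t ^ 2 / 2) := by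
  intro t ht
  set e : ℝ := Real.exp (-σ₀ ^ 2 * t ^ 2 / 2) with he
  have hepos : 0 < e := Real.exp_pos _
  have hkey : ∀ m s : ℝ,
      ‖Complex.exp (Complex.I * (m : ℂ) * t - (s : ℂ) ^ 2 * t ^ 2 / 2)‖
        = Real.exp (-s ^ 2 * t ^ 2 / 2) := by
    intro m s
    rw [Complex.norm_exp]
    congr 1
    simp [Complex.sub_re, Complex.mul_re, Complex.div_re, Complex.I_re, Complex.I_im,
      Complex.normSq, Complex.ofReal_re, Complex.ofReal_im, pow_two]
    ring
  have hterm : ∀ j : Fin n,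
      ‖Complex.exp (Complex.I * (μ j : ℂ) * t - (σ j : ℂ) ^ 2 * t ^ 2 / 2)‖ ≤ e := by
    intro j
    rw [hkey]
    apply Real.exp_le_exp.2
    have : σ₀ ^ 2 ≤ σ j ^ 2 := by nlinarith [hσj j, hσ]
    nlinarith [sq_nonneg t]
  set f : Fin n → ℂ := fun j => Complex.exp (Complex.I * (μ j : ℂ) * t - (σ j : ℂ) ^ 2 * t ^ 2 / 2) with hf
  set B := Finset.univ.filter (fun j : Fin n => (μ j, σ j) ≠ (μ₀, σ₀)) with hB
  set G := Finset.univ.filter (fun j : Fin n => (μ j, σ j) = (μ₀, σ₀)) with hG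
  have hcard : G.card + B.card = n := by
    rw [hG, hB]
    rw [Finset.card_filter_add_card_filter_not]
    simp
  have hSG : ∑ j ∈ G, f j = (G.card : ℂ) * Complex.exp (Complex.I * (μ₀ : ℂ) * t - (σ₀ : ℂ) ^ 2 * t ^ 2 / 2) := by
    rw [Finset.sum_congr rfl (fun j hj => ?_), Finset.sum_const, nsmul_eq_mul]
    have := (Finset.mem_filter.1 hj).2
    have h1 : μ j = μ₀ := congrArg Prod.fst this
    have h2 : σ j = σ₀ := congrArg Prod.snd this
    rw [hf]; simp [h1, h2]
  have habsSG : ‖∑ j ∈ G, f j‖ = G.card * e := by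
    rw [hSG, norm_mul, hkey, Complex.norm_natCast]
  have habsSB : ‖∑ j ∈ B, f j‖ ≤ B.card * e := by
    refine le_trans (norm_sum_le _ _) ?_
    calc ∑ j ∈ B, ‖f j‖ ≤ ∑ _j ∈ B, e := Finset.sum_le_sum (fun j _ => hterm j)
      _ = B.card * e := by rw [Finset.sum_const, nsmul_eq_mul]
  have hsplit : ∑ j, f j = ∑ j ∈ G, f j + ∑ j ∈ B, f j := by
    rw [hG, hB]
    exact (Finset.sum_filter_add_sum_filter_not _ _ _).symm
  have habsS_lower : (G.card : ℝ) * e - B.card * e ≤ ‖∑ j, f j‖ := by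
    have hGe : ∑ j ∈ G, f j = (∑ j, f j) - ∑ j ∈ B, f j := by rw [hsplit]; ring
    have h1 : ‖∑ j ∈ G, f j‖ ≤ ‖∑ j, f j‖ + ‖∑ j ∈ B, f j‖ := by
      rw [hGe, sub_eq_add_neg]
      refine le_trans (norm_add_le _ _) ?_
      rw [norm_neg]
    linarith [habsSB, h1, habsSG.symm.le, habsSG.le]
  have habsS_upper : ‖∑ j, f j‖ ≤ n * e := by
    refine le_trans (norm_sum_le _ _) ?_
    calc ∑ j, ‖f j‖ ≤ ∑ _j : Fin n, e := Finset.sum_le_sum (fun j _ => hterm j)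
      _ = n * e := by rw [Finset.sum_const, nsmul_eq_mul, Finset.card_univ, Fintype.card_fin]
  have hφt : ‖φ t‖ = (1 / n : ℝ) * ‖∑ j, f j‖ := by
    rw [hφ t, norm_mul, Complex.norm_real, Real.norm_eq_abs]
    rw [_root_.abs_of_nonneg (show (0:ℝ) ≤ 1 / n by positivity)]
  have hn' : (0 : ℝ) < n := Nat.cast_pos.2 hn
  constructor
  · rw [hφt]
    have hGc : (G.card : ℝ) = n - B.card := by
      have := hcard
      push_cast [← this]
      ring
    have h1 : (1 - 2 * ε₀) * n * e ≤ ‖∑ j, f j‖ := by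
      refine le_trans ?_ habsS_lower
      rw [hGc]
      nlinarith [hprop, hepos]
    rw [div_mul_eq_mul_div, one_mul, le_div_iff₀ hn']
    linarith [h1]
  · rw [hφt]
    rw [div_mul_eq_mul_div, one_mul, div_le_iff₀ hn']
    linarith [habsS_upper]
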